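/- arXiv:1510.01809 — 2 statements merged into one kernel-verified Lean document; each statement's English description precedes it below -/
import Mathlib

section
/- Let $I$ be a nonnegative random variable with density $k$ and let $U$ be a $\sigma$-finite measure on $\mathbb{R}$ satisfying the functional equation $\int_t^\infty k(s)\,ds=\int_{\mathbb{R}}k(te^{-y})\,U(dy)$ for a.e. $t>0$. Suppose $\beta\in\mathbb{C}$ with $\operatorname{Re}\beta>0$ is such that $\int_{\mathbb{R}}e^{(\operatorname{Re}\beta)y}U(dy)<\infty$ and $\mathbb{E}(I^{\operatorname{Re}\beta})<\infty$. Then $\mathbb{E}(I^{\beta})=\beta\,\Big(\int_{\mathbb{R}}e^{\beta y}U(dy)\Big)\,\mathbb{E}(I^{\beta-1})$. -/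
open MeasureTheory Real Set ENNReal Complex

/-- lintegral scaling on a set S with (c*·)⁻¹' S = S' -/
lemma lint_scale_aux (f : ℝ → ℝ≥0∞) (hf : Measurable f) {c : ℝ} (hc : 0 < c)
    {S : Set ℝ} (hS : MeasurableSet S) :
    ∫⁻ s in (fun x => c * x) ⁻¹' S, f (c * s) = ENNReal.ofReal c⁻¹ * ∫⁻ u in S, f u := by
  rw [← setLIntegral_map hS hf (measurable_const_mul c),
    Real.map_volume_mul_left (ne_of_gt hc), Measure.restrict_smul, lintegral_smul_measure,
    abs_of_pos (inv_pos.mpr hc), smul_eq_mul]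

lemma lint_scale_Ioi (f : ℝ → ℝ≥0∞) (hf : Measurable f) {c : ℝ} (hc : 0 < c) :
    ∫⁻ s in Ioi (0:ℝ), f (c * s) = ENNReal.ofReal c⁻¹ * ∫⁻ u in Ioi (0:ℝ), f u := by
  have h := lint_scale_aux f hf hc (measurableSet_Ioi (a := (0:ℝ)))
  have : (fun x => c * x) ⁻¹' Ioi (0:ℝ) = Ioi 0 := by
    ext x; simp only [mem_preimage, mem_Ioi]; constructor
    · intro h1; nlinarith
    · intro h1; nlinarith
  rwa [this] at h

lemma lint_scale_Ioo (f : ℝ → ℝ≥0∞) (hf : Measurable f) {c T : ℝ} (hc : 0 < c) :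
    ∫⁻ s in Ioo (0:ℝ) T, f (c * s) = ENNReal.ofReal c⁻¹ * ∫⁻ u in Ioo (0:ℝ) (c * T), f u := by
  have h := lint_scale_aux f hf hc (measurableSet_Ioo (a := (0:ℝ)) (b := c * T))
  have : (fun x => c * x) ⁻¹' Ioo (0:ℝ) (c*T) = Ioo 0 T := by
    ext x
    simp only [mem_preimage, mem_Ioo]
    constructor
    · rintro ⟨h1,h2⟩; exact ⟨by nlinarith, by nlinarith⟩
    · rintro ⟨h1,h2⟩; exact ⟨by nlinarith, by nlinarith⟩
  rwa [this] at h

lemma pointwise_scale {k : ℝ → ℝ} {ρ : ℝ} {y s : ℝ} (hs : 0 < s) :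
    ENNReal.ofReal (s^(ρ-1)) * ENNReal.ofReal (k (s * Real.exp (-y)))
      = ENNReal.ofReal (Real.exp ((ρ-1)*y)) *
        ENNReal.ofReal ((Real.exp (-y) * s)^(ρ-1) * k (Real.exp (-y) * s)) := by
  have hc : (0:ℝ) < Real.exp (-y) := Real.exp_pos _
  have h1 : (Real.exp (-y) * s)^(ρ-1) = Real.exp (-y) ^ (ρ-1) * s ^ (ρ-1) :=
    Real.mul_rpow hc.le hs.le
  have h2 : Real.exp (-y) ^ (ρ-1) = Real.exp (-((ρ-1)*y)) := by
    rw [← Real.exp_mul]; ring_nf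
  have h3 : ENNReal.ofReal (Real.exp ((ρ-1)*y)) * ENNReal.ofReal (Real.exp (-((ρ-1)*y))) = 1 := by
    rw [← ENNReal.ofReal_mul (by positivity), ← Real.exp_add]; simp
  rw [mul_comm s (Real.exp (-y))] at *
  rw [h1, h2, ENNReal.ofReal_mul (by positivity), ENNReal.ofReal_mul (by positivity),
    ← mul_assoc, ← mul_assoc, h3, one_mul]

lemma f_meas {k : ℝ → ℝ} (hkmeas : Measurable k) {ρ : ℝ} :
    Measurable (fun u : ℝ => ENNReal.ofReal (u^(ρ-1) * k u)) :=
  ((measurable_id.pow_const _).mul hkmeas).ennreal_ofReal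

lemma inner_Ioi {k : ℝ → ℝ} (hkmeas : Measurable k) (ρ y : ℝ) :
    ∫⁻ s in Ioi (0:ℝ), ENNReal.ofReal (s^(ρ-1)) * ENNReal.ofReal (k (s * Real.exp (-y)))
      = ENNReal.ofReal (Real.exp (ρ*y)) * ∫⁻ u in Ioi (0:ℝ), ENNReal.ofReal (u^(ρ-1) * k u) := by
  have hc : (0:ℝ) < Real.exp (-y) := Real.exp_pos _
  rw [setLIntegral_congr_fun measurableSet_Ioi
    (fun s hs => pointwise_scale (k := k) hs),
    lintegral_const_mul' _ _ ENNReal.ofReal_ne_top,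
    lint_scale_Ioi _ (f_meas hkmeas) hc, ← mul_assoc, ← ENNReal.ofReal_mul (by positivity),
    Real.exp_neg, inv_inv, ← Real.exp_add]
  ring_nf

lemma inner_Ioo {k : ℝ → ℝ} (hkmeas : Measurable k) (ρ y T : ℝ) :
    ∫⁻ s in Ioo (0:ℝ) T, ENNReal.ofReal (s^(ρ-1)) * ENNReal.ofReal (k (s * Real.exp (-y)))
      = ENNReal.ofReal (Real.exp (ρ*y)) *
        ∫⁻ u in Ioo (0:ℝ) (Real.exp (-y) * T), ENNReal.ofReal (u^(ρ-1) * k u) := by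
  have hc : (0:ℝ) < Real.exp (-y) := Real.exp_pos _
  rw [setLIntegral_congr_fun measurableSet_Ioo
    (fun s hs => pointwise_scale (k := k) hs.1),
    lintegral_const_mul' _ _ ENNReal.ofReal_ne_top,
    lint_scale_Ioo _ (f_meas hkmeas) hc, ← mul_assoc, ← ENNReal.ofReal_mul (by positivity),
    Real.exp_neg, inv_inv, ← Real.exp_add]
  ring_nf

lemma rpow_lint {ρ : ℝ} (hρ : 0 < ρ) {t : ℝ} (ht : 0 < t) :
    ∫⁻ s in Ioo (0:ℝ) t, ENNReal.ofReal (s^(ρ-1)) = ENNReal.ofReal (t^ρ / ρ) := by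
  have hint : IntegrableOn (fun s : ℝ => s^(ρ-1)) (Ioo 0 t) volume := by
    have h2 := intervalIntegral.intervalIntegrable_rpow' (a := 0) (b := t) (r := ρ-1) (by linarith)
    rw [intervalIntegrable_iff_integrableOn_Ioc_of_le ht.le] at h2
    exact h2.mono_set Ioo_subset_Ioc_self
  have hnn : 0 ≤ᵐ[volume.restrict (Ioo (0:ℝ) t)] fun s : ℝ => s^(ρ-1) := by
    filter_upwards [ae_restrict_mem measurableSet_Ioo] with s hs
    exact Real.rpow_nonneg hs.1.le _
  rw [← ofReal_integral_eq_lintegral_ofReal hint hnn, ← integral_Ioc_eq_integral_Ioo,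
    ← intervalIntegral.integral_of_le ht.le, integral_rpow (Or.inl (by linarith))]
  norm_num
  rw [Real.zero_rpow hρ.ne']
  norm_num

lemma tail_zero (g : ℝ → ℝ≥0∞) (c : ℝ)
    (h : ∀ n : ℕ, ∃ t, c ≤ t ∧ t < c + 1/(n+1) ∧ ∫⁻ x in Ioi t, g x = 0) :
    ∫⁻ x in Ioi c, g x = 0 := by
  choose t h1 h2 h3 using h
  have hsub : Ioi c ⊆ ⋃ n, Ioi (t n) := by
    intro x hx
    obtain ⟨n, hn⟩ := exists_nat_one_div_lt (show 0 < x - c by simpa using hx)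
    exact mem_iUnion.2 ⟨n, lt_of_lt_of_le (h2 n) (by linarith)⟩
  refine le_antisymm ?_ zero_le
  calc ∫⁻ x in Ioi c, g x ≤ ∫⁻ x in ⋃ n, Ioi (t n), g x := lintegral_mono_set hsub
    _ ≤ ∑' n, ∫⁻ x in Ioi (t n), g x := lintegral_iUnion_le _ _
    _ = 0 := by simp [h3]
lemma hV_lemma {k : ℝ → ℝ} (hk : ∀ t, 0 ≤ k t) (hkmeas : Measurable k)
    (hkint : IntegrableOn k (Ioi 0) volume) {ρ : ℝ} (hρ : 0 < ρ)
    (hM : ∫⁻ t in Ioi (0:ℝ), ENNReal.ofReal (t^ρ * k t) < ⊤) :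
    ∫⁻ s in Ioi (0:ℝ), ENNReal.ofReal (s^(ρ-1)) * ENNReal.ofReal (∫ t in Ioi s, k t) < ⊤ := by
  set Φ : ℝ × ℝ → ℝ≥0∞ := fun p =>
    Set.indicator {q : ℝ × ℝ | q.1 < q.2}
      (fun q => ENNReal.ofReal (q.1 ^ (ρ-1)) * ENNReal.ofReal (k q.2)) p with hΦ
  have hset : MeasurableSet {q : ℝ × ℝ | q.1 < q.2} := measurableSet_lt measurable_fst measurable_snd
  have hΦmeas : Measurable Φ :=
    (((measurable_fst.pow_const _).ennreal_ofReal).mul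
      ((hkmeas.comp measurable_snd).ennreal_ofReal)).indicator hset
  have step1 : ∀ s : ℝ, 0 < s →
      (∫⁻ t in Ioi (0:ℝ), Φ (s, t)) = ENNReal.ofReal (s^(ρ-1)) * ∫⁻ t in Ioi s, ENNReal.ofReal (k t) := by
    intro s hs
    have hpt : ∀ t : ℝ, Φ (s, t)
        = (Ioi s).indicator (fun t => ENNReal.ofReal (s^(ρ-1)) * ENNReal.ofReal (k t)) t := by
      intro t
      by_cases h : s < t <;> simp [hΦ, Set.indicator, h, mem_Ioi]
    simp_rw [hpt]
    rw [lintegral_indicator measurableSet_Ioi, Measure.restrict_restrict measurableSet_Ioi,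
      Set.inter_eq_self_of_subset_left (Ioi_subset_Ioi hs.le),
      lintegral_const_mul' _ _ ENNReal.ofReal_ne_top]
  have step2 : ∀ t : ℝ, 0 < t →
      (∫⁻ s in Ioi (0:ℝ), Φ (s, t)) = ENNReal.ofReal (t^ρ * k t) * ENNReal.ofReal ρ⁻¹ := by
    intro t ht
    have hpt : ∀ s : ℝ, Φ (s, t)
        = (Iio t).indicator (fun s => ENNReal.ofReal (s^(ρ-1)) * ENNReal.ofReal (k t)) s := by
      intro s
      by_cases h : s < t <;> simp [hΦ, Set.indicator, h, mem_Iio]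
    simp_rw [hpt]
    rw [lintegral_indicator measurableSet_Iio, Measure.restrict_restrict measurableSet_Iio]
    have : Iio t ∩ Ioi 0 = Ioo (0:ℝ) t := by ext x; simp [mem_Ioo, mem_Iio, mem_Ioi, and_comm]
    rw [this, lintegral_mul_const' _ _ ENNReal.ofReal_ne_top, rpow_lint hρ ht,
      ← ENNReal.ofReal_mul (by positivity)]
    rw [show t ^ ρ / ρ * k t = t ^ ρ * k t * ρ⁻¹ by ring, ENNReal.ofReal_mul (mul_nonneg (Real.rpow_nonneg ht.le _) (hk t))]
  have hKor : ∀ s : ℝ, s ∈ Ioi (0:ℝ) →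
      ENNReal.ofReal (s^(ρ-1)) * ENNReal.ofReal (∫ t in Ioi s, k t) = ∫⁻ t in Ioi (0:ℝ), Φ (s, t) := by
    intro s hs
    rw [step1 s hs, ofReal_integral_eq_lintegral_ofReal
      (hkint.mono_set (Ioi_subset_Ioi hs.le)) (Filter.Eventually.of_forall (fun t => hk t))]
  rw [setLIntegral_congr_fun measurableSet_Ioi hKor]
  rw [lintegral_lintegral_swap hΦmeas.aemeasurable]
  rw [setLIntegral_congr_fun measurableSet_Ioi step2]
  rw [lintegral_mul_const' _ _ ENNReal.ofReal_ne_top]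
  exact ENNReal.mul_lt_top hM ENNReal.ofReal_lt_top
lemma stepA {k : ℝ → ℝ} (hk : ∀ t, 0 ≤ k t) (hkmeas : Measurable k)
    (hkint : IntegrableOn k (Ioi 0) volume) {β : ℂ} (hβ : 0 < β.re)
    (hM : ∫⁻ t in Ioi (0:ℝ), ENNReal.ofReal (t ^ β.re * k t) < ⊤) :
    ∫ t in Ioi (0:ℝ), (t:ℂ)^β * (k t:ℂ)
      = β * ∫ s in Ioi (0:ℝ), (s:ℂ)^(β-1) * ((∫ t in Ioi s, k t : ℝ) : ℂ) := by
  have hβ0 : β ≠ 0 := fun h => by rw [h] at hβ; simp at hβ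
  have hre : (β - 1).re = β.re - 1 := by simp
  set μ := volume.restrict (Ioi (0:ℝ)) with hμ
  set S : Set (ℝ × ℝ) := {q : ℝ × ℝ | 0 < q.2 ∧ q.2 < q.1} with hS
  have hSmeas : MeasurableSet S :=
    (measurableSet_lt measurable_const measurable_snd).inter
      (measurableSet_lt measurable_snd measurable_fst)
  set F : ℝ × ℝ → ℂ := fun p => S.indicator (fun q => (q.2:ℂ)^(β-1) * (k q.1 : ℂ)) p with hF
  have hFmeas : Measurable F :=
    (((Complex.measurable_ofReal.comp measurable_snd).pow_const (β-1)).mul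
      (Complex.measurable_ofReal.comp (hkmeas.comp measurable_fst))).indicator hSmeas
  -- (a) pointwise identity in t
  have ha : ∀ t : ℝ, t ∈ Ioi (0:ℝ) →
      (t:ℂ)^β * (k t:ℂ) = β * ∫ s in Ioi (0:ℝ), F (t, s) := by
    intro t ht
    have hpt : ∀ s : ℝ, F (t, s)
        = (Ioo 0 t).indicator (fun s : ℝ => (s:ℂ)^(β-1)) s * (k t : ℂ) := by
      intro s
      by_cases h : 0 < s ∧ s < t <;>
        simp [hF, hS, Set.indicator, h, mem_Ioo]
    simp_rw [hpt]
    rw [integral_mul_const, integral_indicator measurableSet_Ioo,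
      Measure.restrict_restrict measurableSet_Ioo,
      Set.inter_eq_self_of_subset_left Ioo_subset_Ioi_self,
      ← integral_Ioc_eq_integral_Ioo, ← intervalIntegral.integral_of_le (le_of_lt ht),
      integral_cpow (Or.inl (by rw [hre]; simpa using hβ))]
    have h1 : β - 1 + 1 = β := by ring
    rw [h1]
    push_cast
    rw [Complex.zero_cpow hβ0]
    field_simp
    ring
  -- (b) product integrability
  have hb : Integrable F (μ.prod μ) := by
    refine ⟨hFmeas.aestronglyMeasurable, ?_⟩
    rw [hasFiniteIntegral_iff_norm]
    have hnorm : ∀ p : ℝ × ℝ, ENNReal.ofReal ‖F p‖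
        = S.indicator (fun q => ENNReal.ofReal (q.2 ^ (β.re - 1)) * ENNReal.ofReal (k q.1)) p := by
      intro p
      by_cases h : p ∈ S
      · have h2 : p ∈ S := h
        rw [hS] at h2
        simp only [hF, Set.indicator_of_mem h, norm_mul]
        rw [Complex.norm_cpow_eq_rpow_re_of_pos h2.1, Complex.norm_real, Real.norm_eq_abs,
          _root_.abs_of_nonneg (hk _), hre, ENNReal.ofReal_mul (Real.rpow_nonneg h2.1.le _)]
      · simp [hF, Set.indicator_of_notMem h]
    simp_rw [hnorm]
    have hmeas2 : Measurable fun q : ℝ × ℝ =>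
        ENNReal.ofReal (q.2 ^ (β.re - 1)) * ENNReal.ofReal (k q.1) :=
      ((measurable_snd.pow_const _).ennreal_ofReal).mul
        ((hkmeas.comp measurable_fst).ennreal_ofReal)
    rw [lintegral_prod _ ((hmeas2.indicator hSmeas).aemeasurable)]
    have hinner : ∀ t : ℝ, t ∈ Ioi (0:ℝ) →
        (∫⁻ s, S.indicator (fun q => ENNReal.ofReal (q.2 ^ (β.re - 1)) * ENNReal.ofReal (k q.1)) (t, s) ∂μ)
          = ENNReal.ofReal (t ^ β.re * k t) * ENNReal.ofReal (β.re)⁻¹ := by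
      intro t ht
      have hpt : ∀ s : ℝ, s ∈ Ioi (0:ℝ) →
          S.indicator (fun q => ENNReal.ofReal (q.2 ^ (β.re - 1)) * ENNReal.ofReal (k q.1)) (t, s)
            = (Iio t).indicator (fun s => ENNReal.ofReal (s ^ (β.re - 1)) * ENNReal.ofReal (k t)) s := by
        intro s hs
        rw [mem_Ioi] at hs
        by_cases h2 : s < t <;> simp [hS, Set.indicator, hs, h2, mem_Iio]
      rw [hμ, setLIntegral_congr_fun measurableSet_Ioi hpt,
        lintegral_indicator measurableSet_Iio, Measure.restrict_restrict measurableSet_Iio]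
      have hio : Iio t ∩ Ioi 0 = Ioo (0:ℝ) t := by
        ext x; simp [mem_Ioo, mem_Iio, mem_Ioi, and_comm]
      rw [hio, lintegral_mul_const' _ _ ENNReal.ofReal_ne_top, rpow_lint hβ (mem_Ioi.mp ht),
        ← ENNReal.ofReal_mul (div_nonneg (Real.rpow_nonneg (le_of_lt (mem_Ioi.mp ht)) _) hβ.le),
        show t ^ β.re / β.re * k t = t ^ β.re * k t * (β.re)⁻¹ by ring,
        ENNReal.ofReal_mul (mul_nonneg (Real.rpow_nonneg (le_of_lt (mem_Ioi.mp ht)) _) (hk t))]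
    rw [hμ, setLIntegral_congr_fun measurableSet_Ioi hinner,
      lintegral_mul_const' _ _ ENNReal.ofReal_ne_top]
    rw [hμ] at hM
    exact ENNReal.mul_lt_top hM ENNReal.ofReal_lt_top
  -- (d) inner integral after swapping
  have hd : ∀ s : ℝ, s ∈ Ioi (0:ℝ) →
      (∫ t in Ioi (0:ℝ), F (t, s)) = (s:ℂ)^(β-1) * ((∫ t in Ioi s, k t : ℝ) : ℂ) := by
    intro s hs
    rw [mem_Ioi] at hs
    have hpt : ∀ t : ℝ, F (t, s) = (Ioi s).indicator (fun t => (s:ℂ)^(β-1) * (k t : ℂ)) t := by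
      intro t
      by_cases h : s < t
      · simp [hF, hS, Set.indicator, h, mem_Ioi, hs]
      · simp [hF, hS, Set.indicator, h, mem_Ioi]
    simp_rw [hpt]
    rw [integral_indicator measurableSet_Ioi, Measure.restrict_restrict measurableSet_Ioi,
      Set.inter_eq_self_of_subset_left (Ioi_subset_Ioi hs.le), integral_const_mul]
    exact congrArg (fun z => (s:ℂ)^(β-1) * z) integral_ofReal
  calc ∫ t in Ioi (0:ℝ), (t:ℂ)^β * (k t:ℂ)
      = ∫ t in Ioi (0:ℝ), β * ∫ s in Ioi (0:ℝ), F (t, s) :=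
        setIntegral_congr_fun measurableSet_Ioi (fun t ht => ha t ht)
    _ = β * ∫ t in Ioi (0:ℝ), ∫ s in Ioi (0:ℝ), F (t, s) := integral_const_mul β _
    _ = β * ∫ s in Ioi (0:ℝ), ∫ t in Ioi (0:ℝ), F (t, s) := by
        rw [integral_integral_swap hb]
    _ = β * ∫ s in Ioi (0:ℝ), (s:ℂ)^(β-1) * ((∫ t in Ioi s, k t : ℝ) : ℂ) := by
        rw [setIntegral_congr_fun measurableSet_Ioi (fun s hs => hd s hs)]
lemma stepC_right (k : ℝ → ℝ) (β : ℂ) (y : ℝ) :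
    (∫ s in Ioi (0:ℝ), (s:ℂ)^(β-1) * (k (s * Real.exp (-y)) : ℂ))
      = Complex.exp (β * y) * ∫ u in Ioi (0:ℝ), (u:ℂ)^(β-1) * (k u : ℂ) := by
  set c : ℝ := Real.exp (-y) with hc
  have hcpos : 0 < c := Real.exp_pos _
  set G : ℝ → ℂ := fun u => (u:ℂ)^(β-1) * (k u : ℂ) with hG
  have hpt : ∀ s : ℝ, s ∈ Ioi (0:ℝ) →
      (s:ℂ)^(β-1) * (k (s * Real.exp (-y)) : ℂ) = ((Real.exp y : ℝ):ℂ)^(β-1) * G (c * s) := by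
    intro s hs
    rw [mem_Ioi] at hs
    have h1 : (Real.exp y) * (c * s) = s := by
      rw [hc, ← mul_assoc, ← Real.exp_add]; simp
    have h2 : (s:ℂ)^(β-1) = ((Real.exp y : ℝ):ℂ)^(β-1) * (((c * s : ℝ)):ℂ)^(β-1) := by
      rw [← mul_cpow_ofReal_nonneg (Real.exp_nonneg y) (by positivity), ← Complex.ofReal_mul, h1]
    rw [hG, h2, mul_comm s c]
    ring
  rw [setIntegral_congr_fun measurableSet_Ioi hpt, integral_const_mul,
    MeasureTheory.integral_comp_mul_left_Ioi G 0 hcpos, mul_zero]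
  have h3 : (c⁻¹ : ℝ) • ∫ u in Ioi (0:ℝ), G u = ((Real.exp y : ℝ):ℂ) * ∫ u in Ioi (0:ℝ), G u := by
    rw [hc, Real.exp_neg, inv_inv, Complex.real_smul]
  rw [h3, ← mul_assoc]
  congr 1
  rw [Complex.ofReal_exp]
  rw [show ((y:ℂ)) = (y:ℂ) from rfl]
  have h4 : (Complex.exp (y:ℂ))^(β-1) = Complex.exp ((y:ℂ) * (β-1)) := by
    rw [Complex.cpow_def_of_ne_zero (Complex.exp_ne_zero _), Complex.log_exp (by simp [Real.pi_pos]) (by simp [Real.pi_pos.le])]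
  rw [h4, ← Complex.exp_add]
  congr 1
  ring


/-- the functional equation
`∫_t^∞ k(s) ds = ∫_ℝ k(t e^{-y}) U(dy)` (a.e. `t > 0`) implies the moment recurrence
`E(I^β) = β (∫ e^{βy} U(dy)) E(I^{β-1})` for complex `β` with `Re β > 0`, under the
stated finiteness conditions. -/
theorem moment_recurrence
    (k : ℝ → ℝ) (hk : ∀ t, 0 ≤ k t) (hkmeas : Measurable k)
    (hkdens : ∫ t in Set.Ioi (0 : ℝ), k t = 1)
    (U : Measure ℝ) [SigmaFinite U]
    (heq : ∀ᵐ t ∂(volume.restrict (Set.Ioi (0 : ℝ))),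
      (∫ s in Set.Ioi t, k s) = ∫ y, k (t * Real.exp (-y)) ∂U)
    (β : ℂ) (hβ : 0 < β.re)
    (hUfin : (∫⁻ y, ENNReal.ofReal (Real.exp (β.re * y)) ∂U) < ⊤)
    (hIfin : (∫⁻ t in Set.Ioi (0 : ℝ), ENNReal.ofReal (t ^ β.re * k t)) < ⊤) :
    (∫ t in Set.Ioi (0 : ℝ), (t : ℂ) ^ β * (k t : ℂ)) =
      β * (∫ y, Complex.exp (β * (y : ℂ)) ∂U) *
        ∫ t in Set.Ioi (0 : ℝ), (t : ℂ) ^ (β - 1) * (k t : ℂ) := by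
  have hkint : IntegrableOn k (Ioi 0) volume := by
    by_contra h
    rw [integral_undef h] at hkdens
    exact one_ne_zero hkdens.symm
  have hlk : ∫⁻ t in Ioi (0:ℝ), ENNReal.ofReal (k t) = 1 := by
    rw [← ofReal_integral_eq_lintegral_ofReal hkint (Filter.Eventually.of_forall hk), hkdens,
      ENNReal.ofReal_one]
  have hKor : ∀ s : ℝ, 0 ≤ s →
      ENNReal.ofReal (∫ t in Ioi s, k t) = ∫⁻ t in Ioi s, ENNReal.ofReal (k t) := fun s hs =>
    ofReal_integral_eq_lintegral_ofReal (hkint.mono_set (Ioi_subset_Ioi hs))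
      (Filter.Eventually.of_forall hk)
  set J : ℝ≥0∞ := ∫⁻ u in Ioi (0:ℝ), ENNReal.ofReal (u ^ (β.re - 1) * k u) with hJdef
  set L : ℝ → ℝ≥0∞ := fun s => ∫⁻ y, ENNReal.ofReal (k (s * Real.exp (-y))) ∂U with hLdef
  have hmub : Measurable fun p : ℝ × ℝ => ENNReal.ofReal (k (p.1 * Real.exp (-p.2))) :=
    (hkmeas.comp (measurable_fst.mul (Real.measurable_exp.comp measurable_snd.neg))).ennreal_ofReal
  have hV := hV_lemma hk hkmeas hkint hβ hIfin
  -- dichotomy from the functional equation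
  have hLK : ∀ᵐ s ∂(volume.restrict (Ioi (0:ℝ))),
      (L s ≠ ⊤ → ENNReal.ofReal (∫ t in Ioi s, k t) = L s) ∧
      (L s = ⊤ → ∫⁻ t in Ioi s, ENNReal.ofReal (k t) = 0) := by
    filter_upwards [heq, ae_restrict_mem measurableSet_Ioi] with s hs hmem
    rw [mem_Ioi] at hmem
    have hmeasy : Measurable fun y => k (s * Real.exp (-y)) :=
      hkmeas.comp (measurable_const.mul (Real.measurable_exp.comp measurable_neg))
    have hnn : ∀ y : ℝ, ENNReal.ofReal ‖k (s * Real.exp (-y))‖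
        = ENNReal.ofReal (k (s * Real.exp (-y))) := fun y => by
      rw [Real.norm_eq_abs, _root_.abs_of_nonneg (hk _)]
    constructor
    · intro hfin
      have hint : Integrable (fun y => k (s * Real.exp (-y))) U := by
        refine ⟨hmeasy.aestronglyMeasurable, ?_⟩
        rw [hasFiniteIntegral_iff_norm]
        simp_rw [hnn]
        exact lt_top_iff_ne_top.2 hfin
      rw [hs, ofReal_integral_eq_lintegral_ofReal hint (Filter.Eventually.of_forall (fun y => hk _))]
    · intro htop
      have hnint : ¬ Integrable (fun y => k (s * Real.exp (-y))) U := by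
        intro hint
        have h2 := hint.2
        rw [hasFiniteIntegral_iff_norm] at h2
        simp_rw [hnn] at h2
        exact absurd htop (lt_top_iff_ne_top.mp h2)
      have hK0 : (∫ t in Ioi s, k t) = 0 := by rw [hs]; exact integral_undef hnint
      rw [← hKor s hmem.le, hK0, ENNReal.ofReal_zero]
  -- U is nonzero
  have hU0 : U ≠ 0 := by
    intro h0
    have hz : ∀ᵐ t ∂(volume.restrict (Ioi (0:ℝ))), ∫⁻ x in Ioi t, ENNReal.ofReal (k x) = 0 := by
      filter_upwards [heq, ae_restrict_mem measurableSet_Ioi] with t hteq htmem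
      rw [mem_Ioi] at htmem
      rw [h0, integral_zero_measure] at hteq
      rw [← hKor t htmem.le, hteq, ENNReal.ofReal_zero]
    have hsmall : ∀ n : ℕ, ∃ t : ℝ, 0 ≤ t ∧ t < 0 + 1/(n+1) ∧
        ∫⁻ x in Ioi t, ENNReal.ofReal (k x) = 0 := by
      intro n
      by_contra hno
      push_neg at hno
      have hsub : Ioo (0:ℝ) (0 + 1/(n+1)) ⊆
          {t | ¬ (∫⁻ x in Ioi t, ENNReal.ofReal (k x) = 0)} := by
        intro t ht
        exact fun hcon => hno t ht.1.le ht.2 hcon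
      have h1 : volume.restrict (Ioi (0:ℝ)) {t | ¬ (∫⁻ x in Ioi t, ENNReal.ofReal (k x) = 0)} = 0 :=
        ae_iff.mp hz
      have h2 : volume.restrict (Ioi (0:ℝ)) (Ioo (0:ℝ) (0 + 1/(n+1))) = 0 :=
        measure_mono_null hsub h1
      rw [Measure.restrict_apply' measurableSet_Ioi,
        Set.inter_eq_self_of_subset_left Ioo_subset_Ioi_self, Real.volume_Ioo] at h2
      have hpos : (0:ℝ) < 1/(n+1) := by positivity
      rw [ENNReal.ofReal_eq_zero] at h2
      linarith
    have h3 := tail_zero (fun x => ENNReal.ofReal (k x)) 0 hsmall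
    rw [h3] at hlk
    exact zero_ne_one hlk
  -- choose y₀
  obtain ⟨y0, hy0nn, hcpos, hcfin⟩ : ∃ y0 : ℝ, 0 ≤ y0 ∧
      0 < (∫⁻ y in Iic y0, ENNReal.ofReal (Real.exp (β.re * y)) ∂U) ∧
      (∫⁻ y in Iic y0, ENNReal.ofReal (Real.exp (β.re * y)) ∂U) ≠ ⊤ := by
    have hexy : ∃ n : ℕ, 0 < U (Iic (n:ℝ)) := by
      by_contra hno
      push_neg at hno
      have huniv : (Set.univ : Set ℝ) = ⋃ n : ℕ, Iic (n:ℝ) := by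
        ext x
        simp only [mem_univ, mem_iUnion, mem_Iic, true_iff]
        obtain ⟨n, hn⟩ := exists_nat_ge x
        exact ⟨n, hn⟩
      have : U Set.univ = 0 := by
        rw [huniv]
        refine le_antisymm (le_trans (measure_iUnion_le _) ?_) zero_le
        simp [le_antisymm (hno _) zero_le]
      exact hU0 (Measure.measure_univ_eq_zero.mp this)
    obtain ⟨n, hn⟩ := hexy
    refine ⟨n, Nat.cast_nonneg n, ?_, ?_⟩
    · by_contra hno
      push_neg at hno
      have h0 : (∫⁻ y in Iic (n:ℝ), ENNReal.ofReal (Real.exp (β.re * y)) ∂U) = 0 :=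
        le_antisymm (by simpa using hno) zero_le
      rw [lintegral_eq_zero_iff (by fun_prop)] at h0
      have : (U.restrict (Iic (n:ℝ))) {y : ℝ | ENNReal.ofReal (Real.exp (β.re * y)) ≠ 0} = 0 :=
        ae_iff.mp h0
      have huniv2 : {y : ℝ | ENNReal.ofReal (Real.exp (β.re * y)) ≠ 0} = Set.univ := by
        ext y
        simp [ENNReal.ofReal_eq_zero, not_le, Real.exp_pos]
      rw [huniv2, Measure.restrict_apply_univ] at this
      exact absurd this (ne_of_gt hn)
    · exact ne_top_of_le_ne_top hUfin.ne (setLIntegral_le_lintegral _ _)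
  -- Tonelli over (s, y), full range
  have hT2full : ∫⁻ s in Ioi (0:ℝ), ENNReal.ofReal (s ^ (β.re - 1)) * L s
      = (∫⁻ y, ENNReal.ofReal (Real.exp (β.re * y)) ∂U) * J := by
    have h1 : ∀ s : ℝ, ENNReal.ofReal (s ^ (β.re - 1)) * L s
        = ∫⁻ y, ENNReal.ofReal (s ^ (β.re - 1)) * ENNReal.ofReal (k (s * Real.exp (-y))) ∂U :=
      fun s => (lintegral_const_mul' _ _ ENNReal.ofReal_ne_top).symm
    simp_rw [h1]
    rw [lintegral_lintegral_swap (((measurable_fst.pow_const _).ennreal_ofReal.mul hmub).aemeasurable)]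
    have h2 : ∀ y : ℝ,
        (∫⁻ s in Ioi (0:ℝ), ENNReal.ofReal (s ^ (β.re - 1)) * ENNReal.ofReal (k (s * Real.exp (-y))))
          = ENNReal.ofReal (Real.exp (β.re * y)) * J := fun y => inner_Ioi hkmeas _ y
    simp_rw [h2]
    exact lintegral_mul_const _ (Real.measurable_exp.comp (measurable_id.const_mul _)).ennreal_ofReal
  -- J is finite
  have hJfin : J ≠ ⊤ := by
    by_cases hP : ∃ s : ℝ, 0 < s ∧ ∫⁻ t in Ioi s, ENNReal.ofReal (k t) = 0
    · -- Case: the tail vanishes beyond some point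
      set P : Set ℝ := {s : ℝ | 0 < s ∧ ∫⁻ t in Ioi s, ENNReal.ofReal (k t) = 0} with hPdef
      have hPne : P.Nonempty := hP
      have hbdd : BddBelow P := ⟨0, fun x hx => hx.1.le⟩
      set s₀ : ℝ := sInf P with hs₀def
      have hs₀nn : 0 ≤ s₀ := le_csInf hPne (fun x hx => hx.1.le)
      have hupward : ∀ t : ℝ, s₀ < t → ∫⁻ x in Ioi t, ENNReal.ofReal (k x) = 0 := by
        intro t ht
        obtain ⟨p, hpP, hpt⟩ := exists_lt_of_csInf_lt hPne ht
        exact le_antisymm ((lintegral_mono_set (Ioi_subset_Ioi hpt.le)).trans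
          (le_of_eq hpP.2)) zero_le
      have hdivlt : ∀ n : ℕ, (1:ℝ)/(2*(n+1)) < 1/(n+1) := by
        intro n
        apply div_lt_div_of_pos_left one_pos (by positivity)
        nlinarith [Nat.cast_nonneg (α := ℝ) n]
      have hs₀pos : 0 < s₀ := by
        rcases hs₀nn.lt_or_eq with h | h
        · exact h
        · exfalso
          have hz := tail_zero (fun x => ENNReal.ofReal (k x)) 0 (fun n =>
            ⟨1/(2*(n+1)), by positivity, by rw [zero_add]; exact hdivlt n,
              hupward _ (by rw [← h]; positivity)⟩)
          rw [hz] at hlk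
          exact zero_ne_one hlk
      have htail0 : ∫⁻ x in Ioi s₀, ENNReal.ofReal (k x) = 0 :=
        tail_zero _ s₀ (fun n => ⟨s₀ + 1/(2*(n+1)),
          le_add_of_nonneg_right (by positivity), by linarith [hdivlt n],
          hupward _ (lt_add_of_pos_right _ (by positivity))⟩)
      have hV' : ∫⁻ s in Ioo (0:ℝ) s₀, ENNReal.ofReal (s ^ (β.re - 1)) * L s < ⊤ := by
        have hae : ∀ᵐ s ∂(volume.restrict (Ioo (0:ℝ) s₀)),
            ENNReal.ofReal (s ^ (β.re - 1)) * L s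
              = ENNReal.ofReal (s ^ (β.re - 1)) * ENNReal.ofReal (∫ t in Ioi s, k t) := by
          filter_upwards [ae_restrict_of_ae_restrict_of_subset Ioo_subset_Ioi_self hLK,
            ae_restrict_mem measurableSet_Ioo] with s hsLK hsmem
          by_cases hl : L s = ⊤
          · exact absurd (csInf_le hbdd ⟨hsmem.1, hsLK.2 hl⟩) (not_le.mpr hsmem.2)
          · rw [hsLK.1 hl]
        rw [lintegral_congr_ae hae]
        exact lt_of_le_of_lt (lintegral_mono_set Ioo_subset_Ioi_self) hV
      have hT2' : ∫⁻ s in Ioo (0:ℝ) s₀, ENNReal.ofReal (s ^ (β.re - 1)) * L s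
          = ∫⁻ y, ENNReal.ofReal (Real.exp (β.re * y)) *
              (∫⁻ u in Ioo (0:ℝ) (Real.exp (-y) * s₀),
                ENNReal.ofReal (u ^ (β.re - 1) * k u)) ∂U := by
        have h1 : ∀ s : ℝ, ENNReal.ofReal (s ^ (β.re - 1)) * L s
            = ∫⁻ y, ENNReal.ofReal (s ^ (β.re - 1)) * ENNReal.ofReal (k (s * Real.exp (-y))) ∂U :=
          fun s => (lintegral_const_mul' _ _ ENNReal.ofReal_ne_top).symm
        simp_rw [h1]
        rw [lintegral_lintegral_swap
          (((measurable_fst.pow_const _).ennreal_ofReal.mul hmub).aemeasurable)]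
        exact lintegral_congr (fun y => inner_Ioo hkmeas _ y s₀)
      set J₁ : ℝ≥0∞ := ∫⁻ u in Ioo (0:ℝ) (Real.exp (-y0) * s₀),
        ENNReal.ofReal (u ^ (β.re - 1) * k u) with hJ₁def
      have hlow : (∫⁻ y in Iic y0, ENNReal.ofReal (Real.exp (β.re * y)) ∂U) * J₁
          ≤ ∫⁻ s in Ioo (0:ℝ) s₀, ENNReal.ofReal (s ^ (β.re - 1)) * L s := by
        rw [hT2']
        calc (∫⁻ y in Iic y0, ENNReal.ofReal (Real.exp (β.re * y)) ∂U) * J₁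
            = ∫⁻ y in Iic y0, ENNReal.ofReal (Real.exp (β.re * y)) * J₁ ∂U :=
              (lintegral_mul_const _ (by fun_prop)).symm
          _ ≤ ∫⁻ y in Iic y0, ENNReal.ofReal (Real.exp (β.re * y)) *
                (∫⁻ u in Ioo (0:ℝ) (Real.exp (-y) * s₀),
                  ENNReal.ofReal (u ^ (β.re - 1) * k u)) ∂U := by
              apply lintegral_mono_ae
              filter_upwards [ae_restrict_mem measurableSet_Iic] with y hy
              refine mul_le_mul_right (lintegral_mono_set (Ioo_subset_Ioo_right ?_)) _
              exact mul_le_mul_of_nonneg_right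
                (Real.exp_le_exp.mpr (neg_le_neg hy)) hs₀nn
          _ ≤ _ := setLIntegral_le_lintegral _ _
      have hJ₁fin : J₁ ≠ ⊤ := by
        intro htop
        rw [htop, ENNReal.mul_top hcpos.ne'] at hlow
        exact absurd (lt_of_le_of_lt hlow hV') (lt_irrefl _)
      set m : ℝ := Real.exp (-y0) * s₀ with hm
      have hmpos : 0 < m := by positivity
      have hsplit : J = J₁ + ∫⁻ u in Ici m, ENNReal.ofReal (u ^ (β.re - 1) * k u) := by
        rw [hJdef, ← Ioo_union_Ici_eq_Ioi hmpos, lintegral_union measurableSet_Ici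
          (Set.disjoint_left.mpr (fun x hx1 hx2 => absurd hx1.2 (not_lt.mpr hx2)))]
      have htailb : ∫⁻ u in Ici m, ENNReal.ofReal (u ^ (β.re - 1) * k u)
          ≤ ENNReal.ofReal m⁻¹ * ∫⁻ u in Ioi (0:ℝ), ENNReal.ofReal (u ^ β.re * k u) := by
        calc ∫⁻ u in Ici m, ENNReal.ofReal (u ^ (β.re - 1) * k u)
            ≤ ∫⁻ u in Ici m, ENNReal.ofReal m⁻¹ * ENNReal.ofReal (u ^ β.re * k u) := by
              apply lintegral_mono_ae
              filter_upwards [ae_restrict_mem measurableSet_Ici] with u hu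
              have hu0 : 0 < u := lt_of_lt_of_le hmpos hu
              have hstep : u ^ (β.re - 1) * k u ≤ m⁻¹ * (u ^ β.re * k u) := by
                have h1 : u ^ (β.re - 1) = u ^ β.re / u := by
                  rw [Real.rpow_sub hu0, Real.rpow_one]
                have h2 : u⁻¹ ≤ m⁻¹ := inv_anti₀ hmpos hu
                calc u ^ (β.re - 1) * k u = u⁻¹ * (u ^ β.re * k u) := by
                      rw [h1]; ring
                  _ ≤ m⁻¹ * (u ^ β.re * k u) := mul_le_mul_of_nonneg_right h2
                      (mul_nonneg (Real.rpow_nonneg hu0.le _) (hk u))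
              exact le_trans (ENNReal.ofReal_le_ofReal hstep)
                (le_of_eq (ENNReal.ofReal_mul (inv_nonneg.mpr hmpos.le)))
          _ = ENNReal.ofReal m⁻¹ * ∫⁻ u in Ici m, ENNReal.ofReal (u ^ β.re * k u) :=
              lintegral_const_mul' _ _ ENNReal.ofReal_ne_top
          _ ≤ _ := mul_le_mul_right
              (lintegral_mono_set (fun x hx => lt_of_lt_of_le hmpos hx)) _
      rw [hsplit]
      exact ENNReal.add_ne_top.mpr ⟨hJ₁fin,
        ne_top_of_le_ne_top (ENNReal.mul_lt_top ENNReal.ofReal_lt_top hIfin).ne htailb⟩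
    · -- Case: all tails positive
      push_neg at hP
      have hae : ∀ᵐ s ∂(volume.restrict (Ioi (0:ℝ))),
          ENNReal.ofReal (s ^ (β.re - 1)) * L s
            = ENNReal.ofReal (s ^ (β.re - 1)) * ENNReal.ofReal (∫ t in Ioi s, k t) := by
        filter_upwards [hLK, ae_restrict_mem measurableSet_Ioi] with s hsLK hsmem
        rw [mem_Ioi] at hsmem
        by_cases hl : L s = ⊤
        · exact absurd (hsLK.2 hl) (hP s hsmem)
        · rw [hsLK.1 hl]
      rw [lintegral_congr_ae hae] at hT2full
      have hcρ0 : (∫⁻ y, ENNReal.ofReal (Real.exp (β.re * y)) ∂U) ≠ 0 := by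
        intro h0
        rw [lintegral_eq_zero_iff (by fun_prop)] at h0
        have h1 : (U : Measure ℝ) {y : ℝ | ENNReal.ofReal (Real.exp (β.re * y)) ≠ 0} = 0 :=
          ae_iff.mp h0
        have huniv2 : {y : ℝ | ENNReal.ofReal (Real.exp (β.re * y)) ≠ 0} = Set.univ := by
          ext y
          simp [ENNReal.ofReal_eq_zero, not_le, Real.exp_pos]
        rw [huniv2] at h1
        exact hU0 (Measure.measure_univ_eq_zero.mp h1)
      intro hJtop
      rw [hJtop, ENNReal.mul_top hcρ0] at hT2full
      exact absurd (hT2full ▸ hV) (lt_irrefl _)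
  -- product integrability for the complex Fubini
  have hprod : Integrable
      (fun p : ℝ × ℝ => ((p.1:ℂ)) ^ (β - 1) * (k (p.1 * Real.exp (-p.2)) : ℂ))
      ((volume.restrict (Ioi (0:ℝ))).prod U) := by
    have hHmeas : Measurable fun p : ℝ × ℝ =>
        ((p.1:ℂ)) ^ (β - 1) * (k (p.1 * Real.exp (-p.2)) : ℂ) :=
      ((Complex.measurable_ofReal.comp measurable_fst).pow_const (β - 1)).mul
        (Complex.measurable_ofReal.comp
          (hkmeas.comp (measurable_fst.mul (Real.measurable_exp.comp measurable_snd.neg))))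
    refine ⟨hHmeas.aestronglyMeasurable, ?_⟩
    rw [hasFiniteIntegral_iff_norm, lintegral_prod _ (hHmeas.norm.ennreal_ofReal.aemeasurable)]
    have hin : ∀ s : ℝ, s ∈ Ioi (0:ℝ) →
        (∫⁻ y, ENNReal.ofReal ‖((s:ℂ)) ^ (β - 1) * (k (s * Real.exp (-y)) : ℂ)‖ ∂U)
          = ENNReal.ofReal (s ^ (β.re - 1)) * L s := by
      intro s hs
      rw [mem_Ioi] at hs
      have hn : ∀ y : ℝ, ENNReal.ofReal ‖((s:ℂ)) ^ (β - 1) * (k (s * Real.exp (-y)) : ℂ)‖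
          = ENNReal.ofReal (s ^ (β.re - 1)) * ENNReal.ofReal (k (s * Real.exp (-y))) := by
        intro y
        rw [norm_mul, Complex.norm_cpow_eq_rpow_re_of_pos hs, Complex.norm_real, Real.norm_eq_abs,
          _root_.abs_of_nonneg (hk _), show (β - 1).re = β.re - 1 by simp,
          ENNReal.ofReal_mul (Real.rpow_nonneg hs.le _)]
      simp_rw [hn]
      exact lintegral_const_mul' _ _ ENNReal.ofReal_ne_top
    rw [setLIntegral_congr_fun measurableSet_Ioi hin, hT2full]
    exact ENNReal.mul_lt_top hUfin hJfin.lt_top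
  -- left side of Fubini: use the functional equation
  have hLeft : (∫ s in Ioi (0:ℝ), ∫ y, (s:ℂ) ^ (β - 1) * (k (s * Real.exp (-y)) : ℂ) ∂U)
      = ∫ s in Ioi (0:ℝ), (s:ℂ) ^ (β - 1) * ((∫ t in Ioi s, k t : ℝ) : ℂ) := by
    apply integral_congr_ae
    filter_upwards [heq] with s hs
    rw [integral_const_mul,
      show (∫ a, ((k (s * Real.exp (-a)) : ℝ) : ℂ) ∂U)
          = ((∫ a, k (s * Real.exp (-a)) ∂U : ℝ) : ℂ) from integral_ofReal, ← hs]
  have hswap := integral_integral_swap (f := fun (s : ℝ) (y : ℝ) =>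
    ((s:ℂ)) ^ (β - 1) * (k (s * Real.exp (-y)) : ℂ)) hprod
  calc ∫ t in Ioi (0:ℝ), (t:ℂ) ^ β * (k t : ℂ)
      = β * ∫ s in Ioi (0:ℝ), (s:ℂ) ^ (β - 1) * ((∫ t in Ioi s, k t : ℝ) : ℂ) :=
        stepA hk hkmeas hkint hβ hIfin
    _ = β * ∫ s in Ioi (0:ℝ), ∫ y, (s:ℂ) ^ (β - 1) * (k (s * Real.exp (-y)) : ℂ) ∂U := by
        rw [hLeft]
    _ = β * ∫ y, (∫ s in Ioi (0:ℝ), (s:ℂ) ^ (β - 1) * (k (s * Real.exp (-y)) : ℂ)) ∂U := by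
        rw [hswap]
    _ = β * ∫ y, Complex.exp (β * y) * (∫ u in Ioi (0:ℝ), (u:ℂ) ^ (β - 1) * (k u : ℂ)) ∂U := by
        congr 1
        exact integral_congr_ae (Filter.Eventually.of_forall (fun y => stepC_right k β y))
    _ = β * ((∫ y, Complex.exp (β * y) ∂U) * ∫ u in Ioi (0:ℝ), (u:ℂ) ^ (β - 1) * (k u : ℂ)) := by
        rw [integral_mul_const]
    _ = β * (∫ y, Complex.exp (β * (y:ℂ)) ∂U) *
        ∫ t in Ioi (0:ℝ), (t:ℂ) ^ (β - 1) * (k t : ℂ) := by ring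
end

section
/- Suppose $I$ is a nonnegative random variable that satisfies the perpetuity equation $I\stackrel{d}{=}Q+M\widetilde I$ with $(Q,M)$ independent of $\widetilde I\stackrel{d}{=}I$, $Q\ge0$, $M\ge 0$, and $\mathbb{P}(M>1)>0$. Then $\liminf_{t\to\infty}\frac{\log\mathbb{P}(I>t)}{\log t}>-\infty$, i.e. the tail of $I$ is at least of power-law (Pareto) type. -/
open MeasureTheory Real Set Filter Topology ProbabilityTheory

/-- Goldie–Grübel: a perpetuity `I =d Q + M Ĩ` with `(Q,M) ⊥ Ĩ`,
`Ĩ =d I`, `Q, M ≥ 0` and `P(M > 1) > 0`, has a tail at least of power-law type: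
`liminf_{t→∞} log P(I > t) / log t > -∞`. -/
theorem perpetuity_pareto_tail
    {Ω : Type*} [MeasureSpace Ω] [IsProbabilityMeasure (volume : Measure Ω)]
    (I Itld Q M : Ω → ℝ)
    (hIm : Measurable I) (hItldm : Measurable Itld)
    (hQm : Measurable Q) (hMm : Measurable M)
    (hQ0 : ∀ ω, 0 ≤ Q ω) (hM0 : ∀ ω, 0 ≤ M ω) (hI0 : ∀ ω, 0 ≤ I ω)
    (hindep : IndepFun (fun ω => (Q ω, M ω)) Itld)
    (hsame : Measure.map Itld volume = Measure.map I volume)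
    (hperp : Measure.map I volume
      = Measure.map (fun ω => Q ω + M ω * Itld ω) volume)
    (hM1 : 0 < volume {ω | 1 < M ω}) :
    ⊥ < Filter.liminf
      (fun t : ℝ =>
        ((Real.log ((volume {ω | t < I ω}).toReal) / Real.log t : ℝ) : EReal))
      atTop := by
  set μ := (volume : Measure Ω) with hμdef
  -- choose ε with positive probability that M > 1 + ε
  obtain ⟨ε, hε, hp⟩ : ∃ ε : ℝ, 0 < ε ∧ 0 < μ {ω | 1 + ε < M ω} := by
    by_contra h
    push_neg at h
    have h0 : ∀ n : ℕ, μ {ω | 1 + 1/(n+1 : ℝ) < M ω} = 0 := fun n =>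
      le_antisymm (h (1/(n+1 : ℝ)) (by positivity)) (zero_le)
    have hsub : {ω | 1 < M ω} ⊆ ⋃ n : ℕ, {ω | 1 + 1/(n+1 : ℝ) < M ω} := by
      intro ω hω
      obtain ⟨n, hn⟩ := exists_nat_one_div_lt (K := ℝ) (sub_pos.mpr hω)
      exact mem_iUnion.mpr ⟨n, by simp only [mem_setOf_eq]; linarith⟩
    have : μ {ω | 1 < M ω} = 0 :=
      le_antisymm ((measure_mono hsub).trans (measure_iUnion_null h0).le) (zero_le)
    exact absurd this hM1.ne'
  set p := μ {ω | 1 + ε < M ω} with hpdef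
  have hple : p ≤ 1 := prob_le_one
  have hmapI : ∀ s : ℝ, μ {ω | s < I ω} = Measure.map I μ (Ioi s) := fun s => by
    rw [Measure.map_apply hIm measurableSet_Ioi]; rfl
  have hmapItld : ∀ s : ℝ, μ {ω | s < Itld ω} = μ {ω | s < I ω} := fun s => by
    rw [hmapI, ← hsame, Measure.map_apply hItldm measurableSet_Ioi]; rfl
  -- key recursive inequality
  have key : ∀ t : ℝ, 0 ≤ t → p * μ {ω | t < I ω} ≤ μ {ω | (1+ε)*t < I ω} := by
    intro t ht
    have h1 : μ {ω | (1+ε)*t < I ω} = μ {ω | (1+ε)*t < Q ω + M ω * Itld ω} := by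
      rw [hmapI, hperp, Measure.map_apply (f := fun ω => Q ω + M ω * Itld ω) (hQm.add (hMm.mul hItldm)) measurableSet_Ioi]; rfl
    have h2 : {ω | 1 + ε < M ω} ∩ {ω | t < Itld ω}
        ⊆ {ω | (1+ε)*t < Q ω + M ω * Itld ω} := by
      rintro ω ⟨hM', hI'⟩
      simp only [mem_setOf_eq] at *
      have hIt : 0 < Itld ω := lt_of_le_of_lt ht hI'
      nlinarith [hQ0 ω]
    have e1 : (fun ω => (Q ω, M ω)) ⁻¹' ((univ : Set ℝ) ×ˢ Ioi (1+ε))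
        = {ω | 1 + ε < M ω} := by ext ω; simp [Set.mem_prod]
    have e2 : Itld ⁻¹' Ioi t = {ω | t < Itld ω} := rfl
    have h3 := hindep.measure_inter_preimage_eq_mul ((univ : Set ℝ) ×ˢ Ioi (1+ε)) (Ioi t)
      (MeasurableSet.univ.prod measurableSet_Ioi) measurableSet_Ioi
    rw [e1, e2] at h3
    calc p * μ {ω | t < I ω} = μ ({ω | 1+ε < M ω} ∩ {ω | t < Itld ω}) := by
          rw [h3, hmapItld]
      _ ≤ μ {ω | (1+ε)*t < Q ω + M ω * Itld ω} := measure_mono h2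
      _ = μ {ω | (1+ε)*t < I ω} := h1.symm
  -- iterate
  have iter : ∀ n : ℕ, p^n * μ {ω | (1:ℝ) < I ω} ≤ μ {ω | (1+ε)^n < I ω} := by
    intro n
    induction n with
    | zero => simp
    | succ n ih =>
      have h := key ((1+ε)^n) (by positivity)
      have he : (1+ε) * (1+ε)^n = (1+ε)^(n+1) := by ring
      rw [he] at h
      calc p^(n+1) * μ {ω | (1:ℝ) < I ω} = p * (p^n * μ {ω | (1:ℝ) < I ω}) := by ring
        _ ≤ p * μ {ω | (1+ε)^n < I ω} := mul_le_mul_right ih p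
        _ ≤ μ {ω | (1+ε)^(n+1) < I ω} := h
  -- reduce to an eventual lower bound by a constant
  suffices h : ∃ C : ℝ, ∀ᶠ t : ℝ in atTop,
      (C : EReal) ≤ ((Real.log ((μ {ω | t < I ω}).toReal) / Real.log t : ℝ) : EReal) by
    obtain ⟨C, hC⟩ := h
    exact lt_of_lt_of_le (EReal.bot_lt_coe C) (Filter.le_liminf_of_le (by isBoundedDefault) hC)
  by_cases h1 : μ {ω | (1:ℝ) < I ω} = 0
  · refine ⟨0, ?_⟩
    filter_upwards [eventually_ge_atTop (1:ℝ)] with t ht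
    have hz : μ {ω | t < I ω} = 0 :=
      le_antisymm ((measure_mono (fun ω hω => lt_of_le_of_lt ht hω)).trans h1.le) (zero_le)
    simp [hz]
  · set c : ℝ := (μ {ω | (1:ℝ) < I ω}).toReal with hcdef
    have hc0 : 0 < c := ENNReal.toReal_pos h1 (measure_ne_top μ _)
    have hc1 : c ≤ 1 := by
      have := ENNReal.toReal_mono (by simp) (prob_le_one (μ := μ) (s := {ω | (1:ℝ) < I ω}))
      simpa using this
    set p' : ℝ := p.toReal with hp'def
    have hp'0 : 0 < p' := ENNReal.toReal_pos hp.ne' (measure_ne_top μ _)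
    have hp'1 : p' ≤ 1 := by
      have := ENNReal.toReal_mono (by simp) hple
      simpa using this
    have hlog1ε : 0 < Real.log (1+ε) := Real.log_pos (by linarith)
    have hlp : Real.log p' ≤ 0 := Real.log_nonpos hp'0.le hp'1
    have hlc : Real.log c ≤ 0 := Real.log_nonpos hc0.le hc1
    refine ⟨Real.log p' / Real.log (1+ε) + (Real.log p' + Real.log c), ?_⟩
    filter_upwards [eventually_ge_atTop (Real.exp 1)] with t ht
    have ht1 : 1 < t := by
      have := Real.add_one_le_exp 1
      linarith
    have hlogt : 1 ≤ Real.log t := by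
      rw [← Real.log_exp 1]
      exact Real.log_le_log (Real.exp_pos 1) ht
    have hlt0 : 0 < Real.log t := by linarith
    set n := ⌈Real.log t / Real.log (1+ε)⌉₊ with hndef
    have hn1 : Real.log t / Real.log (1+ε) ≤ (n : ℝ) := Nat.le_ceil _
    have hn2 : (n:ℝ) ≤ Real.log t / Real.log (1+ε) + 1 :=
      (Nat.ceil_lt_add_one (by positivity)).le
    have htn : t ≤ (1+ε)^n := by
      have hlt : Real.log t ≤ (n : ℝ) * Real.log (1+ε) := by
        rw [div_le_iff₀ hlog1ε] at hn1; linarith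
      have h2 : Real.log t ≤ Real.log ((1+ε)^n) := by rw [Real.log_pow]; exact hlt
      exact (Real.log_le_log_iff (by linarith) (by positivity)).mp h2
    have hgt : p^n * μ {ω | (1:ℝ) < I ω} ≤ μ {ω | t < I ω} :=
      (iter n).trans (measure_mono (fun ω hω => lt_of_le_of_lt htn hω))
    have hFt : p'^n * c ≤ (μ {ω | t < I ω}).toReal := by
      have := ENNReal.toReal_mono (measure_ne_top μ _) hgt
      rwa [ENNReal.toReal_mul, ENNReal.toReal_pow] at this
    have hFt0 : 0 < (μ {ω | t < I ω}).toReal := lt_of_lt_of_le (by positivity) hFt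
    have hlogF : (n:ℝ) * Real.log p' + Real.log c ≤ Real.log ((μ {ω | t < I ω}).toReal) := by
      have := Real.log_le_log (by positivity) hFt
      rwa [Real.log_mul (by positivity) hc0.ne', Real.log_pow] at this
    have h5 : (Real.log t / Real.log (1+ε) + 1) * Real.log p' ≤ (n:ℝ) * Real.log p' :=
      mul_le_mul_of_nonpos_right hn2 hlp
    rw [EReal.coe_le_coe_iff, le_div_iff₀ hlt0]
    have hB : (Real.log p' + Real.log c) * Real.log t ≤ Real.log p' + Real.log c := by
      nlinarith
    have h5' : Real.log t / Real.log (1+ε) * Real.log p' + Real.log p'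
        ≤ (n:ℝ) * Real.log p' := by rw [add_mul, one_mul] at h5; exact h5
    have hexp : (Real.log p' / Real.log (1+ε) + (Real.log p' + Real.log c)) * Real.log t
        = Real.log t / Real.log (1+ε) * Real.log p'
          + (Real.log p' + Real.log c) * Real.log t := by ring
    linarith [hlogF, h5', hB, hexp]
end
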